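/- Let t > 0 and let (λ_j)_{j≥0} be a sequence of non-negative reals, and let b ≥ 0. Suppose there is a constant M such that for every k ≥ 0, the number of indices j with b + k/t ≤ λ_j ≤ b + (k+1)/t is at most M·(k+1). Then ∑_{λ_j > b} h_t(λ_j) ≤ M·(1 + ∑_{k=1}^∞ (k+1)·exp(-k²)/(2√π·k)), where h_t(λ) = (t/√π)∫_a^b exp(-t²(λ-ρ)²) dρ for some 0 ≤ a ≤ b. -/

import Mathlib

open Real
open MeasureTheory

set_option maxHeartbeats 1000000


lemma ht_nonneg (t : ℝ) (ht : 0 < t) (a b l : ℝ) (hab : a ≤ b) :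
    0 ≤ (t / Real.sqrt π) * ∫ ρ in a..b, Real.exp (-t ^ 2 * (l - ρ) ^ 2) := by
  have h1 : 0 ≤ t / Real.sqrt π := by positivity
  have h2 : 0 ≤ ∫ ρ in a..b, Real.exp (-t ^ 2 * (l - ρ) ^ 2) :=
    intervalIntegral.integral_nonneg hab (fun x _ => (Real.exp_pos _).le)
  positivity

lemma gauss_integrable (t : ℝ) (ht : 0 < t) (l : ℝ) :
    Integrable (fun ρ : ℝ => Real.exp (-t ^ 2 * (l - ρ) ^ 2)) := by
  have h0 : Integrable (fun x : ℝ => Real.exp (-t ^ 2 * x ^ 2)) :=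
    integrable_exp_neg_mul_sq (by positivity)
  have := h0.comp_sub_right l
  refine this.congr (Filter.Eventually.of_forall fun ρ => ?_)
  ring_nf

lemma ht_le_one (t : ℝ) (ht : 0 < t) (a b l : ℝ) (hab : a ≤ b) :
    (t / Real.sqrt π) * ∫ ρ in a..b, Real.exp (-t ^ 2 * (l - ρ) ^ 2) ≤ 1 := by
  have hint := gauss_integrable t ht l
  have h1 : (∫ ρ in a..b, Real.exp (-t ^ 2 * (l - ρ) ^ 2))
      ≤ ∫ ρ : ℝ, Real.exp (-t ^ 2 * (l - ρ) ^ 2) := by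
    rw [intervalIntegral.integral_of_le hab]
    exact setIntegral_le_integral hint (Filter.Eventually.of_forall fun x => (Real.exp_pos _).le)
  have h2 : (∫ ρ : ℝ, Real.exp (-t ^ 2 * (l - ρ) ^ 2)) = Real.sqrt π / t := by
    have : (∫ ρ : ℝ, Real.exp (-t ^ 2 * (l - ρ) ^ 2))
        = ∫ ρ : ℝ, Real.exp (-t ^ 2 * ρ ^ 2) := by
      rw [← integral_sub_right_eq_self (fun x : ℝ => Real.exp (-t ^ 2 * x ^ 2)) l]
      congr 1; ext ρ; ring_nf
    rw [this, integral_gaussian]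
    rw [show π / t ^ 2 = (Real.sqrt π / t)^2 by
      rw [div_pow, Real.sq_sqrt Real.pi_pos.le]]
    exact Real.sqrt_sq (by positivity)
  have hsp : 0 < Real.sqrt π := Real.sqrt_pos.mpr Real.pi_pos
  calc (t / Real.sqrt π) * ∫ ρ in a..b, Real.exp (-t ^ 2 * (l - ρ) ^ 2)
      ≤ (t / Real.sqrt π) * (Real.sqrt π / t) := by
        apply mul_le_mul_of_nonneg_left _ (by positivity)
        rw [← h2]; exact h1
    _ = 1 := by field_simp

lemma ht_tail (t : ℝ) (ht : 0 < t) (a b l c : ℝ) (hab : a ≤ b) (hl : b < l)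
    (hc : 0 < c) (hcl : c ≤ t * (l - b)) :
    (t / Real.sqrt π) * ∫ ρ in a..b, Real.exp (-t ^ 2 * (l - ρ) ^ 2)
      ≤ Real.exp (-c ^ 2) / (2 * Real.sqrt π * c) := by
  have hlb : 0 < l - b := by linarith
  set D : ℝ := 2 * t ^ 2 * (l - b) with hD
  have hDpos : 0 < D := by positivity
  set Φ : ℝ → ℝ := fun ρ => Real.exp (-t ^ 2 * (l - ρ) ^ 2) / D with hΦ
  have hderiv : ∀ ρ : ℝ, HasDerivAt Φ ((l - ρ) / (l - b) * Real.exp (-t ^ 2 * (l - ρ) ^ 2)) ρ := by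
    intro ρ
    have h1 : HasDerivAt (fun ρ : ℝ => -t ^ 2 * (l - ρ) ^ 2) (2 * t ^ 2 * (l - ρ)) ρ := by
      have h0 : HasDerivAt (fun ρ : ℝ => l - ρ) (-1) ρ := by
        simpa using (hasDerivAt_id ρ).const_sub l
      have := ((h0.pow 2).const_mul (-t ^ 2))
      exact this.congr_deriv (by ring)
    have h2 := h1.exp
    have h3 := h2.div_const D
    exact h3.congr_deriv (by rw [hD]; field_simp)
  have hcontderiv : Continuous fun ρ : ℝ => (l - ρ) / (l - b) * Real.exp (-t ^ 2 * (l - ρ) ^ 2) := by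
    fun_prop
  have hcont : Continuous fun ρ : ℝ => Real.exp (-t ^ 2 * (l - ρ) ^ 2) := by fun_prop
  have step1 : (∫ ρ in a..b, Real.exp (-t ^ 2 * (l - ρ) ^ 2))
      ≤ ∫ ρ in a..b, (l - ρ) / (l - b) * Real.exp (-t ^ 2 * (l - ρ) ^ 2) := by
    apply intervalIntegral.integral_mono_on hab
      (hcont.intervalIntegrable a b) (hcontderiv.intervalIntegrable a b)
    intro ρ hρ
    have hρb : ρ ≤ b := hρ.2
    have h1 : (1 : ℝ) ≤ (l - ρ) / (l - b) := by
      rw [le_div_iff₀ hlb]; linarith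
    nlinarith [Real.exp_pos (-t ^ 2 * (l - ρ) ^ 2)]
  have step2 : (∫ ρ in a..b, (l - ρ) / (l - b) * Real.exp (-t ^ 2 * (l - ρ) ^ 2)) = Φ b - Φ a :=
    intervalIntegral.integral_eq_sub_of_hasDerivAt (fun ρ _ => hderiv ρ)
      (hcontderiv.intervalIntegrable a b)
  have step3 : Φ b - Φ a ≤ Φ b := by
    have : 0 ≤ Φ a := by
      rw [hΦ]; positivity
    linarith
  have hbound : (t / Real.sqrt π) * ∫ ρ in a..b, Real.exp (-t ^ 2 * (l - ρ) ^ 2)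
      ≤ Real.exp (-(t * (l - b)) ^ 2) / (2 * Real.sqrt π * (t * (l - b))) := by
    have hsp : 0 < Real.sqrt π := Real.sqrt_pos.mpr Real.pi_pos
    have hmain : (∫ ρ in a..b, Real.exp (-t ^ 2 * (l - ρ) ^ 2)) ≤ Φ b :=
      le_trans step1 (by rw [step2]; exact step3)
    have hΦb : Φ b = Real.exp (-t ^ 2 * (l - b) ^ 2) / D := rfl
    calc (t / Real.sqrt π) * ∫ ρ in a..b, Real.exp (-t ^ 2 * (l - ρ) ^ 2)
        ≤ (t / Real.sqrt π) * (Real.exp (-t ^ 2 * (l - b) ^ 2) / D) := by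
          apply mul_le_mul_of_nonneg_left _ (by positivity)
          rw [← hΦb]; exact hmain
      _ = Real.exp (-(t * (l - b)) ^ 2) / (2 * Real.sqrt π * (t * (l - b))) := by
          rw [hD, show -(t * (l - b)) ^ 2 = -t ^ 2 * (l - b) ^ 2 by ring]
          field_simp
  refine hbound.trans ?_
  have hsp : 0 < Real.sqrt π := Real.sqrt_pos.mpr Real.pi_pos
  have hu : 0 < t * (l - b) := by positivity
  apply div_le_div₀ (Real.exp_pos _).le _ (by positivity) _
  · exact Real.exp_le_exp.mpr (by nlinarith)
  · nlinarith

theorem sum_ht_above_b_bound (t : ℝ) (ht : 0 < t) (lam : ℕ → ℝ)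
    (hlam : ∀ j, 0 ≤ lam j) (a b : ℝ) (ha : 0 ≤ a) (hab : a ≤ b) (hb : 0 ≤ b) (M : ℝ)
    (hcount : ∀ k : ℕ,
      {j : ℕ | b + k / t ≤ lam j ∧ lam j ≤ b + (k + 1) / t}.Finite ∧
        ({j : ℕ | b + k / t ≤ lam j ∧ lam j ≤ b + (k + 1) / t}.ncard : ℝ) ≤ M * (k + 1)) :
    Summable (fun j : {j : ℕ // b < lam j} =>
        (t / Real.sqrt π) * ∫ ρ in a..b, Real.exp (-t ^ 2 * (lam j - ρ) ^ 2)) ∧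
      (∑' j : {j : ℕ // b < lam j},
          (t / Real.sqrt π) * ∫ ρ in a..b, Real.exp (-t ^ 2 * (lam j - ρ) ^ 2)) ≤
        M * (1 + ∑' k : ℕ,
          (((k : ℝ) + 1) + 1) * Real.exp (-((k : ℝ) + 1) ^ 2) /
            (2 * Real.sqrt π * ((k : ℝ) + 1))) := by
  have hsp : 0 < Real.sqrt π := Real.sqrt_pos.mpr Real.pi_pos
  have hsp1 : 1 ≤ Real.sqrt π := by
    rw [show (1:ℝ) = Real.sqrt 1 by simp]
    exact Real.sqrt_le_sqrt (by nlinarith [Real.pi_gt_three])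
  -- M ≥ 0
  have hM : 0 ≤ M := by
    have h0 := (hcount 0).2
    have : (0:ℝ) ≤ ({j : ℕ | b + 0 / t ≤ lam j ∧ lam j ≤ b + (0 + 1) / t}.ncard : ℝ) := by
      positivity
    push_cast at h0
    linarith
  -- the function
  set H : ℝ → ℝ := fun l => (t / Real.sqrt π) * ∫ ρ in a..b, Real.exp (-t ^ 2 * (l - ρ) ^ 2)
    with hHdef
  have hH0 : ∀ l, 0 ≤ H l := fun l => ht_nonneg t ht a b l hab
  -- rterm: the series on the RHS
  set rterm : ℕ → ℝ := fun k =>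
    (((k : ℝ) + 1) + 1) * Real.exp (-((k : ℝ) + 1) ^ 2) / (2 * Real.sqrt π * ((k : ℝ) + 1))
    with hrterm
  have hrnn : ∀ k, 0 ≤ rterm k := by
    intro k
    have : (0:ℝ) < (k:ℝ) + 1 := by positivity
    rw [hrterm]
    positivity
  have hrsum : Summable rterm := by
    have hg : Summable (fun k : ℕ => Real.exp (-1:ℝ) ^ k) :=
      summable_geometric_of_lt_one (Real.exp_pos _).le (by
        rw [Real.exp_lt_one_iff]; norm_num)
    refine Summable.of_nonneg_of_le hrnn (fun k => ?_) hg
    · 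
      have hk1 : (0:ℝ) < (k:ℝ) + 1 := by positivity
      have h1 : rterm k = (((k : ℝ) + 1) + 1) / (2 * Real.sqrt π * ((k : ℝ) + 1)) *
          Real.exp (-((k : ℝ) + 1) ^ 2) := by rw [hrterm]; ring
      have h2 : (((k : ℝ) + 1) + 1) / (2 * Real.sqrt π * ((k : ℝ) + 1)) ≤ 1 := by
        rw [div_le_one (by positivity)]
        nlinarith
      have h3 : Real.exp (-((k : ℝ) + 1) ^ 2) ≤ Real.exp (-1) ^ k := by
        rw [← Real.exp_nat_mul]
        apply Real.exp_le_exp.mpr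
        nlinarith
      calc rterm k ≤ 1 * Real.exp (-((k : ℝ) + 1) ^ 2) := by
            rw [h1]
            exact mul_le_mul_of_nonneg_right h2 (Real.exp_pos _).le
        _ = Real.exp (-((k : ℝ) + 1) ^ 2) := one_mul _
        _ ≤ Real.exp (-1) ^ k := h3
  have hrts : 0 ≤ ∑' k, rterm k := tsum_nonneg hrnn
  -- c k : the per-bracket bound
  set c : ℕ → ℝ := fun k => if k = 0 then 1 else
    Real.exp (-(k : ℝ) ^ 2) / (2 * Real.sqrt π * (k : ℝ)) with hcdef
  have hcnn : ∀ k, 0 ≤ c k := by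
    intro k
    rw [hcdef]
    rcases Nat.eq_zero_or_pos k with h | h
    · simp [h]
    · have : (0:ℝ) < (k:ℝ) := by exact_mod_cast h
      simp only [Nat.pos_iff_ne_zero.mp h, if_false]
      positivity
  -- pointwise bound on brackets: T k (half-open bracket)
  set T : ℕ → Set ℕ := fun k => {j | b + k / t ≤ lam j ∧ lam j < b + (k + 1) / t} with hTdef
  set T' : ℕ → Set ℕ := fun k => {j | b + k / t ≤ lam j ∧ lam j ≤ b + (k + 1) / t} with hT'def
  have hHc : ∀ k : ℕ, ∀ j ∈ T k, H (lam j) ≤ c k := by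
    intro k j hj
    rcases Nat.eq_zero_or_pos k with h | h
    · rw [hcdef]; simp only [h, if_pos rfl]
      exact ht_le_one t ht a b (lam j) hab
    · have hkpos : (0:ℝ) < (k:ℝ) := by exact_mod_cast h
      have hjk : b + k / t ≤ lam j := hj.1
      have hbl : b < lam j := by
        have : (0:ℝ) < (k:ℝ) / t := by positivity
        linarith
      have hcl : (k:ℝ) ≤ t * (lam j - b) := by
        rw [← div_le_iff₀' ht]
        linarith
      rw [hcdef]
      simp only [Nat.pos_iff_ne_zero.mp h, if_false]
      exact ht_tail t ht a b (lam j) k hab hbl hkpos hcl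
  -- ENNReal machinery
  set φ : ℕ → ENNReal := fun j => ENNReal.ofReal (H (lam j)) with hφdef
  set S : Set ℕ := {j | b < lam j} with hSdef
  -- subtype sum = indicator sum
  have hsub : ∑' j : {j : ℕ // b < lam j}, φ j = ∑' j : ℕ, S.indicator φ j :=
    tsum_subtype S φ
  -- pointwise: indicator S φ ≤ ∑' k, indicator (T k) φ
  have hpt : ∀ j : ℕ, S.indicator φ j ≤ ∑' k : ℕ, (T k).indicator φ j := by
    intro j
    by_cases hj : j ∈ S
    · set k : ℕ := ⌊t * (lam j - b)⌋₊ with hk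
      have hbl : b < lam j := hj
      have hpos : 0 ≤ t * (lam j - b) := by nlinarith
      have hfl : (k:ℝ) ≤ t * (lam j - b) := Nat.floor_le hpos
      have hfu : t * (lam j - b) < (k:ℝ) + 1 := Nat.lt_floor_add_one _
      have hjT : j ∈ T k := by
        refine ⟨?_, ?_⟩
        · have h1 : (k:ℝ) / t ≤ lam j - b := by
            rw [div_le_iff₀ ht]; nlinarith [hfl]
          show b + (k:ℝ) / t ≤ lam j
          linarith
        · have h2 : lam j - b < ((k:ℝ) + 1) / t := by
            rw [lt_div_iff₀ ht]; nlinarith [hfu]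
          show lam j < b + ((k:ℝ) + 1) / t
          linarith
      calc S.indicator φ j = φ j := Set.indicator_of_mem hj φ
        _ = (T k).indicator φ j := (Set.indicator_of_mem hjT φ).symm
        _ ≤ ∑' k : ℕ, (T k).indicator φ j := ENNReal.le_tsum k
    · rw [Set.indicator_of_notMem hj]
      exact zero_le
  -- per-bracket sum bound
  have hbr : ∀ k : ℕ, (∑' j : ℕ, (T k).indicator φ j)
      ≤ ENNReal.ofReal (M * (k + 1)) * ENNReal.ofReal (c k) := by
    intro k
    have hfin := (hcount k).1
    have hcard := (hcount k).2
    have hpt2 : ∀ j : ℕ, (T k).indicator φ j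
        ≤ (T' k).indicator (fun _ => ENNReal.ofReal (c k)) j := by
      intro j
      by_cases hj : j ∈ T k
      · have hj' : j ∈ T' k := ⟨hj.1, hj.2.le⟩
        rw [Set.indicator_of_mem hj, Set.indicator_of_mem hj']
        exact ENNReal.ofReal_le_ofReal (hHc k j hj)
      · rw [Set.indicator_of_notMem hj]
        exact zero_le
    calc (∑' j : ℕ, (T k).indicator φ j)
        ≤ ∑' j : ℕ, (T' k).indicator (fun _ => ENNReal.ofReal (c k)) j :=
          ENNReal.tsum_le_tsum hpt2
      _ = ∑ j ∈ hfin.toFinset, (T' k).indicator (fun _ => ENNReal.ofReal (c k)) j := by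
          apply tsum_eq_sum
          intro j hj
          exact Set.indicator_of_notMem (fun h => hj (hfin.mem_toFinset.mpr h)) _
      _ = ∑ j ∈ hfin.toFinset, ENNReal.ofReal (c k) := by
          apply Finset.sum_congr rfl
          intro j hj
          exact Set.indicator_of_mem (hfin.mem_toFinset.mp hj) _
      _ = (hfin.toFinset.card : ENNReal) * ENNReal.ofReal (c k) := by
          rw [Finset.sum_const, nsmul_eq_mul]
      _ ≤ ENNReal.ofReal (M * (k + 1)) * ENNReal.ofReal (c k) := by
          apply mul_le_mul_left
          have hcc : (hfin.toFinset.card : ℝ) ≤ M * (k + 1) := by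
            rw [← Set.ncard_eq_toFinset_card _ hfin]; exact hcard
          calc ((hfin.toFinset.card : ℕ) : ENNReal)
              = ENNReal.ofReal (hfin.toFinset.card : ℝ) := by
                simp [ENNReal.ofReal_natCast]
            _ ≤ _ := ENNReal.ofReal_le_ofReal hcc
  -- total bound in ENNReal
  have htot : (∑' j : {j : ℕ // b < lam j}, φ j)
      ≤ ENNReal.ofReal (M * (1 + ∑' k, rterm k)) := by
    rw [hsub]
    calc (∑' j : ℕ, S.indicator φ j)
        ≤ ∑' j : ℕ, ∑' k : ℕ, (T k).indicator φ j := ENNReal.tsum_le_tsum hpt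
      _ = ∑' k : ℕ, ∑' j : ℕ, (T k).indicator φ j := ENNReal.tsum_comm
      _ ≤ ∑' k : ℕ, ENNReal.ofReal (M * (k + 1)) * ENNReal.ofReal (c k) :=
          ENNReal.tsum_le_tsum hbr
      _ = ENNReal.ofReal (M * (1 + ∑' k, rterm k)) := by
          rw [tsum_eq_zero_add' ENNReal.summable]
          have h0 : ENNReal.ofReal (M * ((0:ℕ) + 1)) * ENNReal.ofReal (c 0) =
              ENNReal.ofReal M := by
            rw [hcdef]
            norm_num
          have hsucc : ∀ k : ℕ, ENNReal.ofReal (M * ((k+1 : ℕ) + 1)) * ENNReal.ofReal (c (k+1)) =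
              ENNReal.ofReal M * ENNReal.ofReal (rterm k) := by
            intro k
            have hck : c (k+1) = rterm k / ((k:ℝ) + 2) := by
              rw [hcdef, hrterm]
              simp only [Nat.succ_ne_zero, if_false]
              push_cast
              have h1 : (0:ℝ) < (k:ℝ) + 1 := by positivity
              field_simp
              ring
            rw [hck, ← ENNReal.ofReal_mul (by positivity), ← ENNReal.ofReal_mul hM]
            congr 1
            push_cast
            have h2 : ((k:ℝ) + 2) ≠ 0 := by positivity
            field_simp
            ring
          rw [h0]
          simp only [hsucc]
          rw [ENNReal.tsum_mul_left, ← ENNReal.ofReal_tsum_of_nonneg hrnn hrsum,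
            ← ENNReal.ofReal_mul hM, ← ENNReal.ofReal_add hM (by positivity)]
          congr 1
          ring
  -- conclude
  have hfin : (∑' j : {j : ℕ // b < lam j}, φ j) ≠ ⊤ :=
    ne_top_of_le_ne_top ENNReal.ofReal_ne_top htot
  have hsummable : Summable (fun j : {j : ℕ // b < lam j} => H (lam j)) := by
    have := ENNReal.summable_toReal hfin
    refine this.congr fun j => ?_
    rw [hφdef]
    exact ENNReal.toReal_ofReal (hH0 _)
  constructor
  · exact hsummable
  · have heq : ENNReal.ofReal (∑' j : {j : ℕ // b < lam j}, H (lam j))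
        = ∑' j : {j : ℕ // b < lam j}, φ j :=
      ENNReal.ofReal_tsum_of_nonneg (fun j => hH0 _) hsummable
    have := heq ▸ htot
    rwa [ENNReal.ofReal_le_ofReal_iff (by positivity)] at this
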